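/- Let p be prime, a ∈ {1,...,p-1}, and m, n ∈ {1,...,p-2}. Then the sum over k from 1 to p-1, k ≠ a, of k^m / (a-k)^n is congruent mod p to (-1)^(n+1) · a^(m-n) · C(m,n), where 1/(a-k)^n is the modular inverse of (a-k)^n. -/

import Mathlib

open Finset

private lemma dvd_window {d e : ℕ} (h1 : 1 ≤ e) (h2 : e < 2 * d) (h : d ∣ e) : e = d := by
  obtain ⟨c, rfl⟩ := h
  rcases c with _ | _ | c
  · omega
  · omega
  · exfalso
    have h3 : d * (c + 1 + 1) = d * c + 2 * d := by ring
    omega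

private lemma sum_pow_ne_zero (p : ℕ) [Fact p.Prime] (e : ℕ) :
    ∑ x ∈ (univ : Finset (ZMod p)) \ {0}, x ^ e =
      if (p - 1) ∣ e then (-1 : ZMod p) else 0 := by
  classical
  have hcard : Fintype.card (ZMod p) = p := ZMod.card p
  let φ : (ZMod p)ˣ ↪ ZMod p := ⟨fun x ↦ x, fun _ _ h => Units.ext h⟩
  have hmap : univ.map φ = univ \ {0} := by
    ext x
    simp only [mem_map, mem_univ, Function.Embedding.coeFn_mk, true_and, mem_sdiff,
      mem_singleton, φ]
    exact isUnit_iff_ne_zero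
  calc ∑ x ∈ (univ : Finset (ZMod p)) \ {0}, x ^ e
      = ∑ x : (ZMod p)ˣ, (x : ZMod p) ^ e := by rw [← hmap, Finset.sum_map]; rfl
    _ = _ := by rw [FiniteField.sum_pow_units (ZMod p) e, hcard]

theorem sum_ratio_two_terms (p a m n : ℕ) [Fact p.Prime]
    (ha : 1 ≤ a ∧ a ≤ p - 1) (hm : 1 ≤ m ∧ m ≤ p - 2) (hn : 1 ≤ n ∧ n ≤ p - 2) :
    (∑ k ∈ (Finset.Icc 1 (p - 1)).filter (· ≠ a),
        (k : ZMod p) ^ m * (((a : ZMod p) - (k : ZMod p)) ^ n)⁻¹) =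
      (-1 : ZMod p) ^ (n + 1) * (a : ZMod p) ^ ((m : ℤ) - (n : ℤ)) * (m.choose n : ZMod p) := by
  classical
  obtain ⟨ha1, ha2⟩ := ha
  obtain ⟨hm1, hm2⟩ := hm
  obtain ⟨hn1, hn2⟩ := hn
  have hp : p.Prime := Fact.out
  have hp2 : 2 ≤ p := hp.two_le
  have hp3 : 3 ≤ p := by omega
  have hap : a < p := by omega
  have ha0 : (a : ZMod p) ≠ 0 := by
    intro h
    have := (ZMod.natCast_eq_zero_iff a p).mp h
    have := Nat.le_of_dvd (by omega) this
    omega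
  set T : Finset (ZMod p) := (univ : Finset (ZMod p)) \ {0} with hT
  have haT : (a : ZMod p) ∈ T := by simp [hT, ha0]
  set S : Finset (ZMod p) := T.erase (a : ZMod p) with hS
  -- step 1 : reindex
  have step1 : (∑ k ∈ (Finset.Icc 1 (p - 1)).filter (· ≠ a),
        (k : ZMod p) ^ m * (((a : ZMod p) - (k : ZMod p)) ^ n)⁻¹)
      = ∑ x ∈ S, x ^ m * (((a : ZMod p) - x) ^ n)⁻¹ := by
    refine Finset.sum_nbij' (fun k => (k : ZMod p)) (fun x => x.val) ?_ ?_ ?_ ?_ ?_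
    · intro k hk
      simp only [mem_filter, mem_Icc] at hk
      obtain ⟨⟨hk1, hk2⟩, hka⟩ := hk
      have hkp : k < p := by omega
      have hval : (k : ZMod p).val = k := ZMod.val_natCast_of_lt hkp
      refine Finset.mem_erase.mpr ⟨?_, ?_⟩
      · intro h
        apply hka
        have := congrArg ZMod.val h
        rwa [hval, ZMod.val_natCast_of_lt hap] at this
      · simp only [hT, mem_sdiff, mem_univ, mem_singleton, true_and]
        intro h
        have := congrArg ZMod.val h
        rw [hval, ZMod.val_zero] at this
        omega
    · intro x hx
      simp only [hS, hT, mem_erase, mem_sdiff, mem_univ, mem_singleton, true_and] at hx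
      obtain ⟨hxa, hx0⟩ := hx
      have hv0 : x.val ≠ 0 := fun h => hx0 (by rwa [← ZMod.val_eq_zero])
      have hvp : x.val < p := ZMod.val_lt x
      simp only [mem_filter, mem_Icc]
      refine ⟨⟨by omega, by omega⟩, ?_⟩
      intro h
      apply hxa
      have : ((x.val : ℕ) : ZMod p) = x := ZMod.natCast_rightInverse x
      rw [h] at this
      exact this.symm
    · intro k hk
      simp only [mem_filter, mem_Icc] at hk
      exact ZMod.val_natCast_of_lt (by omega)
    · intro x hx
      exact ZMod.natCast_rightInverse x
    · intro k hk; rfl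
  -- step 2 : involution x ↦ a - x
  have step2 : (∑ x ∈ S, x ^ m * (((a : ZMod p) - x) ^ n)⁻¹)
      = ∑ x ∈ S, ((a : ZMod p) - x) ^ m * ((x ^ n)⁻¹) := by
    refine Finset.sum_nbij' (fun x => (a : ZMod p) - x) (fun x => (a : ZMod p) - x) ?_ ?_ ?_ ?_ ?_
    · intro x hx
      simp only [hS, hT, mem_erase, mem_sdiff, mem_univ, mem_singleton, true_and] at hx ⊢
      obtain ⟨hxa, hx0⟩ := hx
      constructor
      · intro h; exact hx0 (by linear_combination -h)
      · intro h; exact hxa (by linear_combination -h)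
    · intro x hx
      simp only [hS, hT, mem_erase, mem_sdiff, mem_univ, mem_singleton, true_and] at hx ⊢
      obtain ⟨hxa, hx0⟩ := hx
      constructor
      · intro h; exact hx0 (by linear_combination -h)
      · intro h; exact hxa (by linear_combination -h)
    · intro x _; ring
    · intro x _; ring
    · intro x _
      rw [sub_sub_cancel]
  -- step 3 : inverse as power
  have step3 : (∑ x ∈ S, ((a : ZMod p) - x) ^ m * ((x ^ n)⁻¹))
      = ∑ x ∈ S, ((a : ZMod p) - x) ^ m * x ^ (p - 1 - n) := by
    apply Finset.sum_congr rfl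
    intro x hx
    simp only [hS, hT, mem_erase, mem_sdiff, mem_univ, mem_singleton, true_and] at hx
    obtain ⟨hxa, hx0⟩ := hx
    congr 1
    apply inv_eq_of_mul_eq_one_right
    rw [← pow_add, show n + (p - 1 - n) = p - 1 by omega]
    exact ZMod.pow_card_sub_one_eq_one hx0
  -- step 4 : expand binomial and swap
  have expand : ∀ x ∈ S, ((a : ZMod p) - x) ^ m * x ^ (p - 1 - n)
      = ∑ i ∈ range (m + 1), (a : ZMod p) ^ i * (-1) ^ (m - i) * (m.choose i) *
          x ^ ((m - i) + (p - 1 - n)) := by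
    intro x _
    rw [sub_eq_add_neg, add_pow, Finset.sum_mul]
    apply Finset.sum_congr rfl
    intro i _
    rw [neg_pow, pow_add]
    ring
  have step4 : (∑ x ∈ S, ((a : ZMod p) - x) ^ m * x ^ (p - 1 - n))
      = ∑ i ∈ range (m + 1), (a : ZMod p) ^ i * (-1) ^ (m - i) * (m.choose i) *
          (∑ x ∈ S, x ^ ((m - i) + (p - 1 - n))) := by
    rw [Finset.sum_congr rfl expand, Finset.sum_comm]
    exact Finset.sum_congr rfl fun i _ => (Finset.mul_sum _ _ _).symm
  -- step 5 : evaluate inner sums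
  have inner : ∀ i ∈ range (m + 1), (∑ x ∈ S, x ^ ((m - i) + (p - 1 - n)))
      = (if m - i = n then (-1 : ZMod p) else 0) - (a : ZMod p) ^ ((m - i) + (p - 1 - n)) := by
    intro i hi
    have him : i ≤ m := Nat.lt_succ_iff.mp (Finset.mem_range.mp hi)
    rw [hS, Finset.sum_erase_eq_sub haT, hT, sum_pow_ne_zero]
    congr 1
    have hiff : ((p - 1) ∣ (m - i) + (p - 1 - n)) ↔ (m - i = n) := by
      constructor
      · intro h
        have := dvd_window (d := p - 1) (by omega) (by omega) h
        omega
      · intro h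
        have he : (m - i) + (p - 1 - n) = p - 1 := by omega
        rw [he]
    rw [if_congr hiff rfl rfl]
  have step5 : (∑ x ∈ S, ((a : ZMod p) - x) ^ m * x ^ (p - 1 - n))
      = (∑ i ∈ range (m + 1), (a : ZMod p) ^ i * (-1) ^ (m - i) * (m.choose i) *
          (if m - i = n then (-1 : ZMod p) else 0))
        - (∑ i ∈ range (m + 1), (a : ZMod p) ^ i * (-1) ^ (m - i) * (m.choose i) *
          (a : ZMod p) ^ ((m - i) + (p - 1 - n))) := by
    rw [step4, ← Finset.sum_sub_distrib]
    apply Finset.sum_congr rfl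
    intro i hi
    rw [inner i hi, mul_sub]
  -- the second sum vanishes
  have hB : (∑ i ∈ range (m + 1), (a : ZMod p) ^ i * (-1) ^ (m - i) * (m.choose i) *
          (a : ZMod p) ^ ((m - i) + (p - 1 - n))) = 0 := by
    have expand2 : (∑ i ∈ range (m + 1), (a : ZMod p) ^ i * (-1) ^ (m - i) * (m.choose i) *
          (a : ZMod p) ^ ((m - i) + (p - 1 - n)))
        = (∑ i ∈ range (m + 1), (1 : ZMod p) ^ i * (-1) ^ (m - i) * (m.choose i)) *
            (a : ZMod p) ^ (m + (p - 1 - n)) := by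
      rw [Finset.sum_mul]
      apply Finset.sum_congr rfl
      intro i hi
      have him : i ≤ m := Nat.lt_succ_iff.mp (Finset.mem_range.mp hi)
      have hpow : (a : ZMod p) ^ i * (a : ZMod p) ^ ((m - i) + (p - 1 - n))
          = (a : ZMod p) ^ (m + (p - 1 - n)) := by
        rw [← pow_add]
        congr 1
        omega
      calc (a : ZMod p) ^ i * (-1) ^ (m - i) * (m.choose i) *
              (a : ZMod p) ^ ((m - i) + (p - 1 - n))
          = ((a : ZMod p) ^ i * (a : ZMod p) ^ ((m - i) + (p - 1 - n))) *
              ((-1) ^ (m - i) * (m.choose i)) := by ring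
        _ = _ := by rw [hpow]; ring
    rw [expand2, ← add_pow, add_neg_cancel, zero_pow (by omega), zero_mul]
  -- the first sum
  by_cases hnm : n ≤ m
  · have hA : (∑ i ∈ range (m + 1), (a : ZMod p) ^ i * (-1) ^ (m - i) * (m.choose i) *
          (if m - i = n then (-1 : ZMod p) else 0))
        = (-1 : ZMod p) ^ (n + 1) * (a : ZMod p) ^ (m - n) * (m.choose n : ZMod p) := by
      rw [Finset.sum_congr rfl (g := fun i => if i = m - n then
          (a : ZMod p) ^ i * (-1) ^ (m - i) * (m.choose i) * (-1) else 0) ?_]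
      · rw [Finset.sum_ite_eq' (range (m + 1)) (m - n)]
        rw [if_pos (Finset.mem_range.mpr (by omega))]
        rw [show m - (m - n) = n by omega, Nat.choose_symm hnm, pow_succ]
        ring
      · intro i hi
        have him : i ≤ m := Nat.lt_succ_iff.mp (Finset.mem_range.mp hi)
        beta_reduce
        by_cases h : i = m - n
        · rw [if_pos h, if_pos (show m - i = n by omega)]
        · rw [if_neg h, if_neg (show ¬ m - i = n by omega), mul_zero]
    have hz : (a : ZMod p) ^ ((m : ℤ) - (n : ℤ)) = (a : ZMod p) ^ (m - n) := by
      rw [show (m : ℤ) - (n : ℤ) = ((m - n : ℕ) : ℤ) by omega, zpow_natCast]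
    rw [step1, step2, step3, step5, hA, hB, sub_zero, hz]
  · have hc0 : (m.choose n : ZMod p) = 0 := by
      rw [Nat.choose_eq_zero_of_lt (by omega), Nat.cast_zero]
    have hA : (∑ i ∈ range (m + 1), (a : ZMod p) ^ i * (-1) ^ (m - i) * (m.choose i) *
          (if m - i = n then (-1 : ZMod p) else 0)) = 0 := by
      apply Finset.sum_eq_zero
      intro i hi
      have him : i ≤ m := Nat.lt_succ_iff.mp (Finset.mem_range.mp hi)
      rw [if_neg (by omega), mul_zero]
    rw [step1, step2, step3, step5, hA, hB, sub_zero, hc0, mul_zero]
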